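/- Let a < 0 < b with a ≥ −π and b ≤ π, and set α = max((b − sin(b))/b, (a − sin(a))/a). Then for every x ∈ [a, b], letting w = x − sin(x), the sector inequality w(αx − w) ≥ 0 holds. -/

import Mathlib

open Real

lemma mul_nonneg_of_nonpos_nonpos' {x y : ℝ} (hx : x ≤ 0) (hy : y ≤ 0) : 0 ≤ x * y := by
  nlinarith

lemma sinc_anti : AntitoneOn (fun t : ℝ => Real.sin t / t) (Set.Ioc 0 Real.pi) := by
  have hconv : Convex ℝ (Set.Ioc (0:ℝ) Real.pi) := convex_Ioc 0 Real.pi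
  have hint : interior (Set.Ioc (0:ℝ) Real.pi) = Set.Ioo 0 Real.pi := interior_Ioc
  apply antitoneOn_of_deriv_nonpos hconv
  · apply ContinuousOn.div Real.continuousOn_sin continuousOn_id
    intro t ht
    exact ne_of_gt ht.1
  · rw [hint]
    intro t ht
    exact (((Real.hasDerivAt_sin t).div (hasDerivAt_id t) (ne_of_gt ht.1)).differentiableAt).differentiableWithinAt
  · rw [hint]
    intro t ht
    have hne : t ≠ 0 := ne_of_gt ht.1
    have hd : HasDerivAt (fun t : ℝ => Real.sin t / t)
        ((Real.cos t * t - Real.sin t * 1) / t ^ 2) t := by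
      exact (Real.hasDerivAt_sin t).div (hasDerivAt_id t) hne
    rw [hd.deriv]
    have hnum : Real.cos t * t - Real.sin t ≤ 0 := by
      rcases le_or_gt (Real.cos t) 0 with hc | hc
      · have hs : 0 ≤ Real.sin t := Real.sin_nonneg_of_nonneg_of_le_pi ht.1.le ht.2.le
        nlinarith [ht.1]
      · have ht2 : t < Real.pi / 2 := by
          by_contra h
          push_neg at h
          exact absurd (Real.cos_nonpos_of_pi_div_two_le_of_le h (by linarith [Real.pi_pos, ht.2])) (not_le.mpr hc)
        have := Real.lt_tan ht.1 ht2
        rw [Real.tan_eq_sin_div_cos] at this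
        have : t * Real.cos t < Real.sin t := (lt_div_iff₀ hc).mp this
        nlinarith
    have ht2 : 0 < t ^ 2 := by positivity
    exact div_nonpos_of_nonpos_of_nonneg (by simpa using hnum) (sq_nonneg t)

/-- For `0 < x ≤ y ≤ π`, `(x - sin x)/x ≤ (y - sin y)/y`, in multiplied form. -/
lemma key_mono {x y : ℝ} (hx : 0 < x) (hxy : x ≤ y) (hy : y ≤ Real.pi) :
    x - Real.sin x ≤ (y - Real.sin y) / y * x := by
  have hy0 : 0 < y := lt_of_lt_of_le hx hxy
  have h := sinc_anti ⟨hx, le_trans hxy hy⟩ ⟨hy0, hy⟩ hxy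
  -- h : sin y / y ≤ sin x / x
  have h1 : (x - Real.sin x) / x ≤ (y - Real.sin y) / y := by
    rw [sub_div, sub_div, div_self (ne_of_gt hx), div_self (ne_of_gt hy0)]
    linarith
  calc x - Real.sin x = (x - Real.sin x) / x * x := by field_simp
    _ ≤ (y - Real.sin y) / y * x := by
        exact mul_le_mul_of_nonneg_right h1 hx.le

/-- **Sector constraint on `x − sin x` from interval bounds.** For `−π ≤ a < 0 < b ≤ π`
and `α = max ((b − sin b)/b) ((a − sin a)/a)`, every `x ∈ [a, b]` with `w = x − sin x`
satisfies the sector inequality `w (α x − w) ≥ 0`. -/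
theorem stmt_15 (a b : ℝ) (ha : a < 0) (hb : 0 < b)
    (ha' : -Real.pi ≤ a) (hb' : b ≤ Real.pi)
    (α : ℝ) (hα : α = max ((b - Real.sin b) / b) ((a - Real.sin a) / a)) :
    ∀ x ∈ Set.Icc a b, 0 ≤ (x - Real.sin x) * (α * x - (x - Real.sin x)) := by
  intro x hx
  obtain ⟨hax, hxb⟩ := hx
  rcases lt_trichotomy x 0 with hx0 | hx0 | hx0
  · -- x < 0 : w ≤ 0 and α x - w ≤ 0
    have hw : x - Real.sin x ≤ 0 := by
      have := Real.le_sin hx0.le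
      linarith
    have hkey : (-x) - Real.sin (-x) ≤ ((-a) - Real.sin (-a)) / (-a) * (-x) := by
      apply key_mono (by linarith) (by linarith) (by linarith)
    rw [Real.sin_neg, Real.sin_neg] at hkey
    have hαa : (a - Real.sin a) / a ≤ α := by rw [hα]; exact le_max_right _ _
    have heq : ((-a) - (-Real.sin a)) / (-a) = (a - Real.sin a) / a := by
      rw [div_eq_div_iff (by linarith) (ne_of_lt ha)]
      ring
    rw [heq] at hkey
    have h2 : α * x - (x - Real.sin x) ≤ 0 := by
      have : (a - Real.sin a) / a * (-x) ≤ α * (-x) :=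
        mul_le_mul_of_nonneg_right hαa (by linarith)
      nlinarith
    exact mul_nonneg_of_nonpos_nonpos' hw h2
  · simp [hx0]
  · -- 0 < x
    have hw : 0 ≤ x - Real.sin x := by
      have := Real.sin_le hx0.le
      linarith
    have hkey : x - Real.sin x ≤ (b - Real.sin b) / b * x := key_mono hx0 hxb hb'
    have hαb : (b - Real.sin b) / b ≤ α := by rw [hα]; exact le_max_left _ _
    have h2 : 0 ≤ α * x - (x - Real.sin x) := by
      have : (b - Real.sin b) / b * x ≤ α * x := mul_le_mul_of_nonneg_right hαb hx0.le
      linarith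
    exact mul_nonneg hw h2
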